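/- Let ω, ω_X, ω_C, γ, g be real numbers with γ ≠ 0 and ϖ_C = ω − ω_C ≠ 0, and set ϖ_X = ω − ω_X. Suppose φ_X : ℝ → ℝ is continuously differentiable, φ_C : ℝ → ℝ is twice continuously differentiable, and the pair (φ_X, φ_C) satisfies the stationary polariton envelope equations at every x ∈ ℝ. Set ζ(x) = g·φ_X(x)². Then φ_C(x) = γ⁻¹·(ϖ_X − g·φ_X(x)²)·φ_X(x) for all x, and there exists a real constant K such that for all x ∈ ℝ, (3ζ(x) − ϖ_X)²·(ζ′(x))² = 8·ζ(x)·Q(ζ(x)), where Q is the cubic polynomial with constant K. -/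

import Mathlib

set_option maxHeartbeats 1000000


/-- Theorem 1(a), forward direction: the stationary polariton envelope equations
imply the cubic relation for `φC` and the first-order ODE for `ζ = g·φX²`. -/
theorem polariton_envelope_implies_zeta_ODE
    (ω ωX ωC γ g : ℝ) (hγ : γ ≠ 0) (hϖC : ω - ωC ≠ 0)
    (φX φC : ℝ → ℝ) (hφX : ContDiff ℝ 1 φX) (hφC : ContDiff ℝ 2 φC)
    (heq1 : ∀ x : ℝ, (g * φX x ^ 2 - (ω - ωX)) * φX x + γ * φC x = 0)
    (heq2 : ∀ x : ℝ, -(1/2) * deriv (deriv φC) x - (ω - ωC) * φC x + γ * φX x = 0) :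
    (∀ x : ℝ, φC x = γ⁻¹ * ((ω - ωX) - g * φX x ^ 2) * φX x) ∧
    ∃ K : ℝ, ∀ x : ℝ,
      (3 * (g * φX x ^ 2) - (ω - ωX)) ^ 2 * (deriv (fun y => g * φX y ^ 2) x) ^ 2 =
      8 * (g * φX x ^ 2) *
        (-(ω - ωC) * ((g * φX x ^ 2) ^ 3
          - (1/2) * (3 * ((ω - ωX) - γ ^ 2 / (ω - ωC)) + (ω - ωX)) * (g * φX x ^ 2) ^ 2
          + ((ω - ωX) - γ ^ 2 / (ω - ωC)) * (ω - ωX) * (g * φX x ^ 2) + K)) := by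
  have hdX : Differentiable ℝ φX := hφX.differentiable one_ne_zero
  have hφCval : ∀ x : ℝ, φC x = γ⁻¹ * ((ω - ωX) - g * φX x ^ 2) * φX x := by
    intro x
    have h := heq1 x
    field_simp
    linarith
  refine ⟨hφCval, ?_⟩
  have hφCfun : φC = fun x => γ⁻¹ * ((ω - ωX) - g * φX x ^ 2) * φX x := funext hφCval
  -- contDiff of φC
  have h2 := (contDiff_succ_iff_deriv (n := 1)).mp (by exact_mod_cast hφC)
  have hdC : Differentiable ℝ φC := h2.1
  have hdC' : Differentiable ℝ (deriv φC) := h2.2.2.differentiable one_ne_zero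
  -- second derivative value
  have hC'' : ∀ x : ℝ, deriv (deriv φC) x = 2 * (γ * φX x - (ω - ωC) * φC x) := by
    intro x; have h := heq2 x; linarith
  -- first derivative value of φC
  have hderivφC : ∀ x : ℝ,
      deriv φC x = γ⁻¹ * ((ω - ωX) - 3 * g * φX x ^ 2) * deriv φX x := by
    intro x
    have hx : HasDerivAt φX (deriv φX x) x := (hdX x).hasDerivAt
    have h1 : HasDerivAt (fun y => γ⁻¹ * ((ω - ωX) - g * φX y ^ 2) * φX y)
        ((γ⁻¹ * (0 - g * (2 * φX x ^ 1 * deriv φX x))) * φX x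
          + γ⁻¹ * ((ω - ωX) - g * φX x ^ 2) * deriv φX x) x := by
      exact ((((hasDerivAt_const x (ω - ωX)).sub ((hx.pow 2).const_mul g)).const_mul γ⁻¹).mul hx)
    rw [hφCfun]
    rw [h1.deriv]; ring
  -- the conserved quantity
  set E : ℝ → ℝ := fun x => -(1/4) * (deriv φC x)^2 - (1/2) * (ω - ωC) * (φC x)^2
      + (1/2) * (ω - ωX) * (φX x)^2 - (3/4) * g * (φX x)^4 with hE
  have hEder : ∀ x : ℝ, HasDerivAt E 0 x := by
    intro x
    have hx : HasDerivAt φX (deriv φX x) x := (hdX x).hasDerivAt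
    have hc : HasDerivAt φC (deriv φC x) x := (hdC x).hasDerivAt
    have hc' : HasDerivAt (deriv φC) (deriv (deriv φC) x) x := (hdC' x).hasDerivAt
    have h1 : HasDerivAt E
        (-(1/4) * (2 * deriv φC x ^ 1 * deriv (deriv φC) x)
          - (1/2) * (ω - ωC) * (2 * φC x ^ 1 * deriv φC x)
          + (1/2) * (ω - ωX) * (2 * φX x ^ 1 * deriv φX x)
          - (3/4) * g * (4 * φX x ^ 3 * deriv φX x)) x := by
      exact ((((hc'.pow 2).const_mul (-(1/4))).sub ((hc.pow 2).const_mul ((1/2) * (ω - ωC)))).add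
        ((hx.pow 2).const_mul ((1/2) * (ω - ωX)))).sub ((hx.pow 4).const_mul ((3/4) * g))
    convert h1 using 1
    rw [hC'' x, hderivφC x, hφCval x]
    field_simp
    ring
  have hEdiff : Differentiable ℝ E := fun x => (hEder x).differentiableAt
  have hEconst : ∀ x : ℝ, E x = E 0 :=
    fun x => is_const_of_deriv_eq_zero hEdiff (fun x => (hEder x).deriv) x 0
  set C : ℝ := E 0 with hCdef
  refine ⟨2 * g * γ^2 * C / (ω - ωC), fun x => ?_⟩
  have hx : HasDerivAt φX (deriv φX x) x := (hdX x).hasDerivAt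
  have hz : deriv (fun y => g * φX y ^ 2) x = g * (2 * φX x ^ 1 * deriv φX x) :=
    ((hx.pow 2).const_mul g).deriv
  have hEx : -(1/4) * (deriv φC x)^2 - (1/2) * (ω - ωC) * (φC x)^2
      + (1/2) * (ω - ωX) * (φX x)^2 - (3/4) * g * (φX x)^4 = C := hEconst x
  rw [hderivφC x, hφCval x] at hEx
  have hγγ : γ⁻¹ * γ = 1 := inv_mul_cancel₀ hγ
  have hw : (ω - ωC)⁻¹ * (ω - ωC) = 1 := inv_mul_cancel₀ hϖC
  have hP : ((ω - ωX) - 3 * g * φX x ^ 2)^2 * (deriv φX x)^2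
      + 2 * (ω - ωC) * ((ω - ωX) - g * φX x ^ 2)^2 * (φX x)^2
      - 2 * (ω - ωX) * γ^2 * (φX x)^2 + 3 * g * γ^2 * (φX x)^4 = -4 * γ^2 * C := by
    linear_combination (-4 * γ^2) * hEx
      + (-((((ω - ωX) - 3 * g * φX x ^ 2)^2 * (deriv φX x)^2
          + 2 * (ω - ωC) * (((ω - ωX) - g * φX x ^ 2)^2) * (φX x)^2) * (1 + γ * γ⁻¹))) * hγγ
  rw [hz]
  rw [div_eq_mul_inv, div_eq_mul_inv, div_eq_mul_inv]
  linear_combination (4 * g * (g * φX x ^ 2)) * hP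
    + (16 * g^2 * γ^2 * C * φX x ^ 2 - 8 * g^2 * (ω - ωX) * γ^2 * φX x ^ 4
        + 12 * g^3 * γ^2 * φX x ^ 6) * hw
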